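/- Write Ψ_q(x) for the characteristic function of singular binary cubic forms over F_q (those x with Disc(x) = 0). Then \hatΨ_q(x) = q^{-1} + q^{-2} − q^{-3} if x = 0; \hatΨ_q(x) = q^{-2} − q^{-3} if x ≠ 0 and Disc(x) = 0; and \hatΨ_q(x) = −q^{-3} if Disc(x) ≠ 0. -/

import Mathlib

open scoped Classical
open MvPolynomial Matrix

noncomputable section

/-- The standard additive character `t ↦ exp(2πi·Tr_{F/F_p}(t)/p)` of a finite field `F`
of characteristic `p`. -/
def psiF (p : ℕ) [Fact p.Prime] (F : Type*) [Field F] [Fintype F] [CharP F p] (t : F) : ℂ :=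
  letI : Algebra (ZMod p) F := ZMod.algebra F p
  Complex.exp (2 * Real.pi * Complex.I * ((Algebra.trace (ZMod p) F t).val : ℂ) / (p : ℂ))

variable {F : Type*} [Field F] [Fintype F]

/-- The bilinear form `[x,x'] = aa' + bb'/3 + cc'/3 + dd'` on binary cubic forms. -/
def bformBC (x y : Fin 4 → F) : F :=
  x 0 * y 0 + x 1 * y 1 / 3 + x 2 * y 2 / 3 + x 3 * y 3

/-- The Fourier transform on the space of binary cubic forms over `F`. -/
def FTBC (p : ℕ) [Fact p.Prime] [CharP F p] (Φ : (Fin 4 → F) → ℂ) (y : Fin 4 → F) : ℂ :=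
  ((Fintype.card F : ℂ) ^ 4)⁻¹ * ∑ x : Fin 4 → F, Φ x * psiF p F (bformBC x y)

/-- The discriminant of the binary cubic form `(a,b,c,d)`. -/
def DiscBC (x : Fin 4 → F) : F :=
  (x 1)^2 * (x 2)^2 + 18 * (x 0) * (x 1) * (x 2) * (x 3) - 4 * (x 0) * (x 2)^3
    - 4 * (x 1)^3 * (x 3) - 27 * (x 0)^2 * (x 3)^2

/-! ### The additive character as an `AddChar`, and basic character sums -/

/-- The standard additive character of `F`, packaged as an `AddChar`. -/
def eFBC (p : ℕ) [Fact p.Prime] [CharP F p] : AddChar F ℂ :=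
  letI : Algebra (ZMod p) F := ZMod.algebra F p
  (ZMod.stdAddChar (N := p)).compAddMonoidHom (Algebra.trace (ZMod p) F).toAddMonoidHom

variable (p : ℕ) [Fact p.Prime] [CharP F p]

lemma eFBC_apply (t : F) : eFBC p t = psiF p F t := by
  letI : Algebra (ZMod p) F := ZMod.algebra F p
  simp only [eFBC, AddChar.compAddMonoidHom_apply, LinearMap.toAddMonoidHom_coe, psiF,
    ZMod.stdAddChar_apply, ZMod.toCircle_apply]

lemma eFBC_ne_one : (eFBC (F := F) p) ≠ 1 := by
  letI : Algebra (ZMod p) F := ZMod.algebra F p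
  have : FiniteDimensional (ZMod p) F := Module.Finite.of_finite
  obtain ⟨t, ht⟩ := DFunLike.ne_iff.mp (Algebra.trace_ne_zero (ZMod p) F)
  rw [AddChar.ne_one_iff]
  refine ⟨t, ?_⟩
  simp only [eFBC, AddChar.compAddMonoidHom_apply, LinearMap.toAddMonoidHom_coe]
  intro h
  exact ht (ZMod.injective_stdAddChar (by simpa using h))

lemma sum_eFBC_mul (A : F) :
    ∑ t : F, eFBC p (A * t) = if A = 0 then (Fintype.card F : ℂ) else 0 := by
  have h1 : ∑ t : F, eFBC p (A * t) = ∑ t : F, (AddChar.mulShift (eFBC p) A) t := by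
    simp [AddChar.mulShift_apply]
  rw [h1, AddChar.sum_eq_ite]
  by_cases hA : A = 0
  · rw [if_pos hA, if_pos (by rw [hA, AddChar.mulShift_zero]; rfl)]
  · rw [if_neg hA, if_neg]
    intro h
    exact (eFBC_ne_one p) ((AddChar.mulShift_unit_eq_one_iff _ (Ne.isUnit hA)).mp h)

lemma sum_eFBC_pair (A B : F) :
    ∑ z : F × F, eFBC p (z.1 * A + z.2 * B) =
      if A = 0 ∧ B = 0 then ((Fintype.card F : ℂ))^2 else 0 := by
  rw [Fintype.sum_prod_type]
  have h : ∀ α β : F, eFBC p (α * A + β * B) = eFBC p (A * α) * eFBC p (B * β) := by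
    intro α β; rw [AddChar.map_add_eq_mul, mul_comm α A, mul_comm β B]
  simp_rw [h, ← Finset.mul_sum, ← Finset.sum_mul, sum_eFBC_mul]
  split_ifs with h1 h2 h2 <;> simp_all <;> ring

/-! ### Singular points of binary cubic forms -/

/-- `y` has a singular (double) point at `[s:t]`: both partial derivatives vanish there. -/
def SingPtBC (y : Fin 4 → F) (s t : F) : Prop :=
  3 * y 0 * s^2 + 2 * y 1 * s * t + y 2 * t^2 = 0 ∧
  y 1 * s^2 + 2 * y 2 * s * t + 3 * y 3 * t^2 = 0

omit [Fintype F] in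
lemma singPtBC_unique {y : Fin 4 → F} {s t s' t' : F} (h3 : (3:F) ≠ 0)
    (h : SingPtBC y s t) (h' : SingPtBC y s' t') (hd : s * t' - s' * t ≠ 0) : y = 0 := by
  obtain ⟨h1, h2⟩ := h
  obtain ⟨h3', h4⟩ := h'
  have h9 : (9:F) ≠ 0 := by
    have h99 : (9:F) = 3 * 3 := by norm_num
    rw [h99]; exact mul_ne_zero h3 h3
  have hd4 : (s * t' - s' * t)^4 ≠ 0 := pow_ne_zero _ hd
  have solve : ∀ u : F, (9:F) * (s * t' - s' * t)^4 * u = 0 → u = 0 := by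
    intro u hu
    rcases mul_eq_zero.mp hu with h|h
    · rcases mul_eq_zero.mp h with h|h
      · exact absurd h h9
      · exact absurd h hd4
    · exact h
  have hy0 : y 0 = 0 := solve _ (by
    linear_combination (9*t^2*s'^2*t'^2 - 12*s*t*s'*t'^3 + 3*s^2*t'^4) * h1 +
      (6*t^2*s'*t'^3 - 6*s*t*t'^4) * h2 +
      (3*t^4*s'^2 - 12*s*t^3*s'*t' + 9*s^2*t^2*t'^2) * h3' +
      (-6*t^4*s'*t' + 6*s*t^3*t'^2) * h4)
  have hy1 : y 1 = 0 := solve _ (by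
    linear_combination (-18*t^2*s'^3*t' + 18*s*t*s'^2*t'^2) * h1 +
      (-9*t^2*s'^2*t'^2 + 9*s^2*t'^4) * h2 +
      (18*s^2*t^2*s'*t' - 18*s^3*t*t'^2) * h3' +
      (9*t^4*s'^2 - 9*s^2*t^2*t'^2) * h4)
  have hy2 : y 2 = 0 := solve _ (by
    linear_combination (9*t^2*s'^4 - 9*s^2*s'^2*t'^2) * h1 +
      (18*s*t*s'^2*t'^2 - 18*s^2*s'*t'^3) * h2 +
      (-9*s^2*t^2*s'^2 + 9*s^4*t'^2) * h3' +
      (-18*s*t^3*s'^2 + 18*s^2*t^2*s'*t') * h4)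
  have hy3 : y 3 = 0 := solve _ (by
    linear_combination (-6*s*t*s'^4 + 6*s^2*s'^3*t') * h1 +
      (3*t^2*s'^4 - 12*s*t*s'^3*t' + 9*s^2*s'^2*t'^2) * h2 +
      (6*s^3*t*s'^2 - 6*s^4*s'*t') * h3' +
      (9*s^2*t^2*s'^2 - 12*s^3*t*s'*t' + 3*s^4*t'^2) * h4)
  funext j
  fin_cases j <;> assumption

omit [Fintype F] in
lemma disc_zero_of_singPtBC_one {y : Fin 4 → F} {e : F} (h3 : (3:F) ≠ 0)
    (h : SingPtBC y 1 e) : DiscBC y = 0 := by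
  obtain ⟨h1, h2⟩ := h
  have h9 : (9:F) ≠ 0 := by
    have h99 : (9:F) = 3 * 3 := by norm_num
    rw [h99]; exact mul_ne_zero h3 h3
  have key : (9:F) * DiscBC y = 0 := by
    simp only [DiscBC]
    linear_combination (27*(y 2)*(y 3)^2*e^2 - 12*(y 2)^3 + 54*(y 1)*(y 3)^2*e +
      54*(y 1)*(y 2)*(y 3) - 81*(y 0)*(y 3)^2) * h1 +
      (-9*(y 2)^2*(y 3)*e^2 + 6*(y 2)^3*e - 36*(y 1)*(y 2)*(y 3)*e + 9*(y 1)*(y 2)^2 -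
      36*(y 1)^2*(y 3)) * h2
  rcases mul_eq_zero.mp key with h|h
  · exact absurd h h9
  · exact h

omit [Fintype F] in
lemma disc_zero_of_singPtBC_zero {y : Fin 4 → F} (h3 : (3:F) ≠ 0)
    (h : SingPtBC y 0 1) : DiscBC y = 0 := by
  obtain ⟨h1, h2⟩ := h
  have hc : y 2 = 0 := by linear_combination h1
  have hd : y 3 = 0 := by
    have h33 : (3:F) * y 3 = 0 := by linear_combination h2
    rcases mul_eq_zero.mp h33 with h|h
    · exact absurd h h3
    · exact h
  simp only [DiscBC, hc, hd]; ring

/-- char-2 square roots exist in a finite field. -/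
lemma exists_sqrt_of_two_eq_zero (h2 : (2:F) = 0) (z : F) : ∃ w : F, w^2 = z := by
  have hinj : Function.Injective (fun w : F => w^2) := by
    intro u v h
    simp only at h
    have huv : (u - v)^2 = 0 := by linear_combination h + (v^2 - u*v)*h2
    exact sub_eq_zero.mp (pow_eq_zero_iff (n := 2) (by norm_num) |>.mp huv)
  obtain ⟨w, hw⟩ := Finite.injective_iff_surjective.mp hinj z
  exact ⟨w, hw⟩

/-- Existence of a singular point for a nonzero form of zero discriminant
(in fact the nonzero hypothesis is not needed). -/
lemma exists_singPtBC {y : Fin 4 → F} (h3 : (3:F) ≠ 0) (hD : DiscBC y = 0) :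
    ∃ s t : F, (s ≠ 0 ∨ t ≠ 0) ∧ SingPtBC y s t := by
  set a := y 0 with ha'
  set b := y 1 with hb'
  set c := y 2 with hc'
  set d := y 3 with hd'
  have hDe : b^2*c^2 + 18*a*b*c*d - 4*a*c^3 - 4*b^3*d - 27*a^2*d^2 = 0 := by
    simpa only [DiscBC, ← ha', ← hb', ← hc', ← hd'] using hD
  have key : (b*c - 9*a*d)^2 = 4*(b^2 - 3*a*c)*(c^2 - 3*b*d) := by linear_combination -3*hDe
  by_cases hR : b^2 - 3*a*c = 0
  · have hQ : b*c - 9*a*d = 0 := by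
      have hq2 : (b*c - 9*a*d)^2 = 0 := by rw [key, hR]; ring
      exact pow_eq_zero_iff (by norm_num) |>.mp hq2
    by_cases ha : a = 0
    · have hb : b = 0 := by
        have hb2 : b^2 = 0 := by rw [← hR, ha]; ring
        exact pow_eq_zero_iff (by norm_num) |>.mp hb2
      exact ⟨1, 0, Or.inl one_ne_zero, by
        constructor <;> (simp only [← ha', ← hb', ← hc', ← hd', ha, hb]; ring)⟩
    · refine ⟨-b, 3*a, Or.inr (mul_ne_zero h3 ha), ?_, ?_⟩
      · linear_combination (-3*a) * hR
      · linear_combination b * hR - 3*a*hQ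
  · by_cases h2 : (2:F) = 0
    · have hQ : b*c - 9*a*d = 0 := by
        have hq2 : (b*c - 9*a*d)^2 = 0 := by
          rw [key]; linear_combination 2*(b^2-3*a*c)*(c^2-3*b*d)*h2
        exact pow_eq_zero_iff (by norm_num) |>.mp hq2
      obtain ⟨k, hk⟩ := exists_sqrt_of_two_eq_zero h2 (c^2 - 3*b*d)
      obtain ⟨l, hl⟩ := exists_sqrt_of_two_eq_zero h2 (b^2 - 3*a*c)
      have hlne : l ≠ 0 := by
        intro h; apply hR; rw [← hl, h]; ring
      refine ⟨k, l, Or.inr hlne, ?_, ?_⟩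
      · linear_combination 3*a*hk + c*hl + b*k*l*h2 + b*hQ
      · linear_combination b*hk + 3*d*hl + c*k*l*h2 + c*hQ
    · refine ⟨-(b*c - 9*a*d), 2*(b^2 - 3*a*c), Or.inr (mul_ne_zero h2 hR), ?_, ?_⟩
      · linear_combination (-9*a) * hDe
      · linear_combination (-3*b) * hDe

/-! ### Parametrization of singular forms -/

/-- First basis vector of the space of cubics with a double root at the point indexed by `m`. -/
def VoneBC : Option F → (Fin 4 → F)
  | none => ![0,0,1,0]
  | some e => ![1, 2*e, e^2, 0]

/-- Second basis vector. -/
def VtwoBC : Option F → (Fin 4 → F)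
  | none => ![0,0,0,1]
  | some e => ![0, 1, 2*e, e^2]

/-- Parametrization of the singular cubic forms. -/
def TmapBC (m : Option F) (z : F × F) : Fin 4 → F :=
  fun i => z.1 * VoneBC m i + z.2 * VtwoBC m i

omit [Fintype F] in
lemma disc_TmapBC (m : Option F) (z : F × F) : DiscBC (TmapBC m z) = 0 := by
  cases m <;>
    simp only [DiscBC, TmapBC, VoneBC, VtwoBC, Matrix.cons_val_zero, Matrix.cons_val_one,
      Matrix.head_cons, Matrix.cons_val_two, Matrix.tail_cons, Matrix.cons_val_three] <;> ring

omit [Fintype F] in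
lemma singPtBC_TmapBC_none (z : F × F) : SingPtBC (TmapBC (none : Option F) z) 1 0 := by
  constructor <;>
    (simp only [TmapBC, VoneBC, VtwoBC, Matrix.cons_val_zero, Matrix.cons_val_one,
      Matrix.head_cons, Matrix.cons_val_two, Matrix.tail_cons, Matrix.cons_val_three]; ring)

omit [Fintype F] in
lemma singPtBC_TmapBC_some (e : F) (z : F × F) : SingPtBC (TmapBC (some e) z) (-e) 1 := by
  constructor <;>
    (simp only [TmapBC, VoneBC, VtwoBC, Matrix.cons_val_zero, Matrix.cons_val_one,
      Matrix.head_cons, Matrix.cons_val_two, Matrix.tail_cons, Matrix.cons_val_three]; ring)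

omit [Fintype F] in
lemma TmapBC_eq_zero_iff (m : Option F) (z : F × F) : TmapBC m z = 0 ↔ z = 0 := by
  constructor
  · intro h
    cases m with
    | none =>
      have h2 := congrFun h 2
      have h3 := congrFun h 3
      simp only [TmapBC, VoneBC, VtwoBC, Matrix.cons_val_two, Matrix.tail_cons, Matrix.head_cons,
        Matrix.cons_val_three, Matrix.cons_val_zero, Matrix.cons_val_one, Pi.zero_apply] at h2 h3
      have hz1 : z.1 = 0 := by linear_combination h2
      have hz2 : z.2 = 0 := by linear_combination h3
      exact Prod.ext hz1 hz2
    | some e =>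
      have h0 := congrFun h 0
      have h1 := congrFun h 1
      simp only [TmapBC, VoneBC, VtwoBC, Matrix.cons_val_zero, Matrix.cons_val_one,
        Matrix.head_cons, Pi.zero_apply] at h0 h1
      have hz1 : z.1 = 0 := by linear_combination h0
      have hz2 : z.2 = 0 := by linear_combination h1 - 2*e*h0
      exact Prod.ext hz1 hz2
  · rintro rfl
    funext i
    simp [TmapBC]

omit [Fintype F] in
lemma TmapBC_inj (h3 : (3:F) ≠ 0) {m m' : Option F} {z z' : F × F} (hz : z ≠ 0)
    (h : TmapBC m z = TmapBC m' z') : m = m' ∧ z = z' := by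
  have hx0 : TmapBC m z ≠ 0 := fun hC => hz ((TmapBC_eq_zero_iff m z).mp hC)
  have hmm : m = m' := by
    by_contra hne
    apply hx0
    cases m with
    | none =>
      cases m' with
      | none => exact absurd rfl hne
      | some e' =>
        refine singPtBC_unique (s' := -e') (t' := 1) h3 (singPtBC_TmapBC_none z) ?_ ?_
        · rw [h]; exact singPtBC_TmapBC_some e' z'
        · norm_num
    | some e =>
      cases m' with
      | none =>
        refine singPtBC_unique (s' := 1) (t' := 0) h3 (singPtBC_TmapBC_some e z) ?_ ?_
        · rw [h]; exact singPtBC_TmapBC_none z'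
        · norm_num
      | some e' =>
        have hee : e ≠ e' := fun hh => hne (by rw [hh])
        refine singPtBC_unique (s' := -e') (t' := 1) h3 (singPtBC_TmapBC_some e z) ?_ ?_
        · rw [h]; exact singPtBC_TmapBC_some e' z'
        · intro hC; exact hee (by linear_combination -hC)
  subst hmm
  refine ⟨rfl, ?_⟩
  cases m with
  | none =>
    have e2 := congrFun h 2
    have e3 := congrFun h 3
    simp only [TmapBC, VoneBC, VtwoBC, Matrix.cons_val_two, Matrix.tail_cons, Matrix.head_cons,
      Matrix.cons_val_three, Matrix.cons_val_zero, Matrix.cons_val_one] at e2 e3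
    have hz1 : z.1 = z'.1 := by linear_combination e2
    have hz2 : z.2 = z'.2 := by linear_combination e3
    exact Prod.ext hz1 hz2
  | some e =>
    have e0 := congrFun h 0
    have e1 := congrFun h 1
    simp only [TmapBC, VoneBC, VtwoBC, Matrix.cons_val_zero, Matrix.cons_val_one,
      Matrix.head_cons] at e0 e1
    have hz1 : z.1 = z'.1 := by linear_combination e0
    have hz2 : z.2 = z'.2 := by linear_combination e1 - 2*e*e0
    exact Prod.ext hz1 hz2

lemma TmapBC_surj (h3 : (3:F) ≠ 0) {x : Fin 4 → F} (hD : DiscBC x = 0) :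
    ∃ m z, TmapBC m z = x := by
  obtain ⟨s, t, hst, E1, E2⟩ := exists_singPtBC h3 hD
  by_cases ht : t = 0
  · -- singular point (s, 0) with s ≠ 0 :  x 0 = x 1 = 0
    have hs : s ≠ 0 := by rcases hst with h|h; exact h; exact absurd ht h
    have hs2 : s^2 ≠ 0 := pow_ne_zero _ hs
    have hx0 : x 0 = 0 := by
      have hh : (3 * x 0) * s^2 = 0 := by rw [ht] at E1; linear_combination E1
      rcases mul_eq_zero.mp hh with h|h
      · rcases mul_eq_zero.mp h with h|h
        · exact absurd h h3
        · exact h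
      · exact absurd h hs2
    have hx1 : x 1 = 0 := by
      have hh : x 1 * s^2 = 0 := by rw [ht] at E2; linear_combination E2
      rcases mul_eq_zero.mp hh with h|h
      · exact h
      · exact absurd h hs2
    refine ⟨none, (x 2, x 3), ?_⟩
    have c0 : TmapBC (none : Option F) (x 2, x 3) 0 = x 0 := by
      simp only [TmapBC, VoneBC, VtwoBC, Matrix.cons_val_zero]
      linear_combination -hx0
    have c1 : TmapBC (none : Option F) (x 2, x 3) 1 = x 1 := by
      simp only [TmapBC, VoneBC, VtwoBC, Matrix.cons_val_one, Matrix.head_cons, Matrix.cons_val_zero]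
      linear_combination -hx1
    have c2 : TmapBC (none : Option F) (x 2, x 3) 2 = x 2 := by
      simp only [TmapBC, VoneBC, VtwoBC, Matrix.cons_val_two, Matrix.tail_cons,
        Matrix.head_cons]
      ring
    have c3 : TmapBC (none : Option F) (x 2, x 3) 3 = x 3 := by
      simp only [TmapBC, VoneBC, VtwoBC, Matrix.cons_val_three, Matrix.tail_cons,
        Matrix.head_cons]
      ring
    funext i
    fin_cases i
    · exact c0
    · exact c1
    · exact c2
    · exact c3
  · -- singular point with t ≠ 0 : normalize to (r, 1) with r = s/t
    have ht2 : t^2 ≠ 0 := pow_ne_zero _ ht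
    have E1' : 3*(x 0)*(s/t)^2 + 2*(x 1)*(s/t) + x 2 = 0 := by
      have key : (3*(x 0)*(s/t)^2 + 2*(x 1)*(s/t) + x 2) * t^2
          = 3 * x 0 * s ^ 2 + 2 * x 1 * s * t + x 2 * t ^ 2 := by
        field_simp
      rcases mul_eq_zero.mp (key.trans E1) with h|h
      · exact h
      · exact absurd h ht2
    have E2' : (x 1)*(s/t)^2 + 2*(x 2)*(s/t) + 3*(x 3) = 0 := by
      have key : ((x 1)*(s/t)^2 + 2*(x 2)*(s/t) + 3*(x 3)) * t^2
          = x 1 * s ^ 2 + 2 * x 2 * s * t + 3 * x 3 * t ^ 2 := by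
        field_simp
      rcases mul_eq_zero.mp (key.trans E2) with h|h
      · exact h
      · exact absurd h ht2
    set r : F := s/t with hr
    refine ⟨some (-r), (x 0, x 1 + 2*(x 0)*r), ?_⟩
    have c0 : TmapBC (some (-r)) (x 0, x 1 + 2*(x 0)*r) 0 = x 0 := by
      simp only [TmapBC, VoneBC, VtwoBC, Matrix.cons_val_zero]
      ring
    have c1 : TmapBC (some (-r)) (x 0, x 1 + 2*(x 0)*r) 1 = x 1 := by
      simp only [TmapBC, VoneBC, VtwoBC, Matrix.cons_val_one, Matrix.head_cons, Matrix.cons_val_zero]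
      ring
    have c2 : TmapBC (some (-r)) (x 0, x 1 + 2*(x 0)*r) 2 = x 2 := by
      simp only [TmapBC, VoneBC, VtwoBC, Matrix.cons_val_two, Matrix.tail_cons,
        Matrix.head_cons]
      linear_combination -E1'
    have c3 : TmapBC (some (-r)) (x 0, x 1 + 2*(x 0)*r) 3 = x 3 := by
      simp only [TmapBC, VoneBC, VtwoBC, Matrix.cons_val_three, Matrix.tail_cons,
        Matrix.head_cons]
      have h33 : (3:F) * ((x 0) * 0 + (x 1 + 2*(x 0)*r) * (-r)^2) = (3:F) * (x 3) := by
        linear_combination 2*r*E1' - E2'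
      exact mul_left_cancel₀ h3 h33
    funext i
    fin_cases i
    · exact c0
    · exact c1
    · exact c2
    · exact c3

omit [Fintype F] in
lemma bform_TmapBC (m : Option F) (z : F × F) (y : Fin 4 → F) :
    bformBC (TmapBC m z) y =
      z.1 * bformBC (VoneBC m) y + z.2 * bformBC (VtwoBC m) y := by
  simp only [bformBC, TmapBC]; ring

omit [Fintype F] in
lemma bform_VoneBC_none (y : Fin 4 → F) :
    bformBC (VoneBC (none : Option F)) y = y 2 / 3 := by
  simp only [bformBC, VoneBC, Matrix.cons_val_zero, Matrix.cons_val_one, Matrix.head_cons,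
    Matrix.cons_val_two, Matrix.tail_cons, Matrix.cons_val_three]; ring

omit [Fintype F] in
lemma bform_VtwoBC_none (y : Fin 4 → F) :
    bformBC (VtwoBC (none : Option F)) y = y 3 := by
  simp only [bformBC, VtwoBC, Matrix.cons_val_zero, Matrix.cons_val_one, Matrix.head_cons,
    Matrix.cons_val_two, Matrix.tail_cons, Matrix.cons_val_three]; ring

omit [Fintype F] in
lemma bform_VoneBC_some (h3 : (3:F) ≠ 0) (e : F) (y : Fin 4 → F) :
    bformBC (VoneBC (some e)) y = (3*(y 0) + 2*(y 1)*e + (y 2)*e^2) / 3 := by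
  simp only [bformBC, VoneBC, Matrix.cons_val_zero, Matrix.cons_val_one, Matrix.head_cons,
    Matrix.cons_val_two, Matrix.tail_cons, Matrix.cons_val_three]
  field_simp
  ring

omit [Fintype F] in
lemma bform_VtwoBC_some (h3 : (3:F) ≠ 0) (e : F) (y : Fin 4 → F) :
    bformBC (VtwoBC (some e)) y = ((y 1) + 2*(y 2)*e + 3*(y 3)*e^2) / 3 := by
  simp only [bformBC, VtwoBC, Matrix.cons_val_zero, Matrix.cons_val_one, Matrix.head_cons,
    Matrix.cons_val_two, Matrix.tail_cons, Matrix.cons_val_three]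
  field_simp
  ring

/-- The dual condition indexed by `m`. -/
def CndBC (y : Fin 4 → F) : Option F → Prop
  | none => SingPtBC y 0 1
  | some e => SingPtBC y 1 e

omit [Fintype F] in
lemma cnd_iff (h3 : (3:F) ≠ 0) (y : Fin 4 → F) (m : Option F) :
    (bformBC (VoneBC m) y = 0 ∧ bformBC (VtwoBC m) y = 0) ↔ CndBC y m := by
  cases m with
  | none =>
    rw [bform_VoneBC_none, bform_VtwoBC_none, div_eq_zero_iff]
    constructor
    · rintro ⟨hA | hA, hB⟩
      · exact ⟨by linear_combination hA, by linear_combination 3*hB⟩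
      · exact absurd hA h3
    · rintro ⟨h1, h2⟩
      have hy2 : y 2 = 0 := by linear_combination h1
      have hy3 : y 3 = 0 := by
        have h33 : (3:F) * y 3 = 0 := by linear_combination h2
        rcases mul_eq_zero.mp h33 with h|h
        · exact absurd h h3
        · exact h
      exact ⟨Or.inl hy2, hy3⟩
  | some e =>
    rw [bform_VoneBC_some h3, bform_VtwoBC_some h3, div_eq_zero_iff, div_eq_zero_iff]
    constructor
    · rintro ⟨hA | hA, hB | hB⟩
      · exact ⟨by linear_combination hA, by linear_combination hB⟩
      · exact absurd hB h3
      · exact absurd hA h3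
      · exact absurd hA h3
    · rintro ⟨h1, h2⟩
      exact ⟨Or.inl (by linear_combination h1), Or.inl (by linear_combination h2)⟩

omit [Fintype F] in
lemma cndBC_unique (h3 : (3:F) ≠ 0) {y : Fin 4 → F} {m m' : Option F}
    (h : CndBC y m) (h' : CndBC y m') (hne : m ≠ m') : y = 0 := by
  cases m with
  | none =>
    cases m' with
    | none => exact absurd rfl hne
    | some e' =>
      refine singPtBC_unique h3 h h' ?_
      norm_num
  | some e =>
    cases m' with
    | none =>
      refine singPtBC_unique h3 h h' ?_
      norm_num
    | some e' =>
      have hee : e ≠ e' := fun hh => hne (by rw [hh])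
      refine singPtBC_unique h3 h h' ?_
      intro hC; exact hee (by linear_combination -hC)

omit [Fintype F] in
lemma cndBC_disc (h3 : (3:F) ≠ 0) {y : Fin 4 → F} {m : Option F} (h : CndBC y m) :
    DiscBC y = 0 := by
  cases m with
  | none => exact disc_zero_of_singPtBC_zero h3 h
  | some e => exact disc_zero_of_singPtBC_one h3 h

lemma cndBC_exists (h3 : (3:F) ≠ 0) {y : Fin 4 → F} (hD : DiscBC y = 0) :
    ∃ m, CndBC y m := by
  obtain ⟨s, t, hst, E1, E2⟩ := exists_singPtBC h3 hD
  by_cases hs : s = 0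
  · have ht : t ≠ 0 := by rcases hst with h|h; exact absurd hs h; exact h
    have ht2 : t^2 ≠ 0 := pow_ne_zero _ ht
    refine ⟨none, ?_, ?_⟩
    · have hh : y 2 * t^2 = 0 := by rw [hs] at E1; linear_combination E1
      rcases mul_eq_zero.mp hh with h|h
      · linear_combination h
      · exact absurd h ht2
    · have hh : (3 * y 3) * t^2 = 0 := by rw [hs] at E2; linear_combination E2
      rcases mul_eq_zero.mp hh with h|h
      · linear_combination h
      · exact absurd h ht2
  · have hs2 : s^2 ≠ 0 := pow_ne_zero _ hs
    refine ⟨some (t/s), ?_, ?_⟩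
    · have key : (3*(y 0)*1^2 + 2*(y 1)*1*(t/s) + (y 2)*(t/s)^2) * s^2
          = 3 * y 0 * s ^ 2 + 2 * y 1 * s * t + y 2 * t ^ 2 := by
        field_simp
      rcases mul_eq_zero.mp (key.trans E1) with h|h
      · exact h
      · exact absurd h hs2
    · have key : ((y 1)*1^2 + 2*(y 2)*1*(t/s) + 3*(y 3)*(t/s)^2) * s^2
          = y 1 * s ^ 2 + 2 * y 2 * s * t + 3 * y 3 * t ^ 2 := by
        field_simp
      rcases mul_eq_zero.mp (key.trans E2) with h|h
      · exact h
      · exact absurd h hs2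

/-! ### The master summation identity -/

lemma masterBC (h3 : (3:F) ≠ 0) (y : Fin 4 → F) :
    ∑ v : Fin 4 → F, (if DiscBC v = 0 then (1:ℂ) else 0) * psiF p F (bformBC v y)
      = (∑ m : Option F, if (bformBC (VoneBC m) y = 0 ∧ bformBC (VtwoBC m) y = 0)
          then ((Fintype.card F : ℂ))^2 else 0) - (Fintype.card F : ℂ) := by
  simp_rw [← eFBC_apply p]
  have step1 : ∑ v : Fin 4 → F, (if DiscBC v = 0 then (1:ℂ) else 0) * eFBC p (bformBC v y)
      = ∑ v ∈ Finset.univ.filter (fun v : Fin 4 → F => DiscBC v = 0),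
          eFBC p (bformBC v y) := by
    rw [Finset.sum_filter]
    exact Finset.sum_congr rfl (fun v _ => by split_ifs <;> simp)
  have h0mem : (0 : Fin 4 → F) ∈ Finset.univ.filter (fun v : Fin 4 → F => DiscBC v = 0) := by
    rw [Finset.mem_filter]; exact ⟨Finset.mem_univ _, by simp [DiscBC]⟩
  have hg0 : eFBC p (bformBC 0 y) = 1 := by
    have hb : bformBC (0 : Fin 4 → F) y = 0 := by simp [bformBC]
    rw [hb, AddChar.map_zero_eq_one]
  have step3 : ∑ m : Option F, ∑ z : F × F, eFBC p (bformBC (TmapBC m z) y)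
      = ∑ m : Option F, if (bformBC (VoneBC m) y = 0 ∧ bformBC (VtwoBC m) y = 0)
          then ((Fintype.card F : ℂ))^2 else 0 := by
    refine Finset.sum_congr rfl (fun m _ => ?_)
    simp_rw [bform_TmapBC]
    exact sum_eFBC_pair p _ _
  have step2 : ∑ m : Option F, ∑ z : F × F, eFBC p (bformBC (TmapBC m z) y)
      = (∑ v ∈ Finset.univ.filter (fun v : Fin 4 → F => DiscBC v = 0),
          eFBC p (bformBC v y)) + (Fintype.card F : ℂ) := by
    have hsplit : ∀ m : Option F, ∑ z : F × F, eFBC p (bformBC (TmapBC m z) y)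
        = 1 + ∑ z ∈ Finset.univ.erase (0 : F × F), eFBC p (bformBC (TmapBC m z) y) := by
      intro m
      rw [← Finset.add_sum_erase _ _ (Finset.mem_univ (0 : F × F))]
      congr 1
      have hT0 : TmapBC m (0 : F × F) = (0 : Fin 4 → F) := (TmapBC_eq_zero_iff m 0).mpr rfl
      rw [hT0, hg0]
    simp_rw [hsplit]
    rw [Finset.sum_add_distrib, Finset.sum_const, Finset.card_univ, Fintype.card_option]
    have hbij : ∑ m : Option F, ∑ z ∈ Finset.univ.erase (0 : F × F),
          eFBC p (bformBC (TmapBC m z) y)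
        = ∑ v ∈ (Finset.univ.filter (fun v : Fin 4 → F => DiscBC v = 0)).erase 0,
            eFBC p (bformBC v y) := by
      rw [← Finset.sum_product']
      refine Finset.sum_bij (fun q _ => TmapBC q.1 q.2) ?_ ?_ ?_ ?_
      · rintro ⟨m, z⟩ hq
        simp only [Finset.mem_product, Finset.mem_univ, Finset.mem_erase, true_and] at hq
        simp only [Finset.mem_erase, Finset.mem_filter, Finset.mem_univ, true_and]
        exact ⟨fun hC => hq.1 ((TmapBC_eq_zero_iff _ _).mp hC), disc_TmapBC _ _⟩
      · rintro ⟨m, z⟩ hq ⟨m', z'⟩ hq' heq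
        simp only [Finset.mem_product, Finset.mem_univ, Finset.mem_erase, true_and] at hq
        obtain ⟨h1, h2⟩ := TmapBC_inj h3 hq.1 heq
        exact Prod.ext h1 h2
      · intro v hv
        simp only [Finset.mem_erase, Finset.mem_filter, Finset.mem_univ, true_and] at hv
        obtain ⟨m, z, hmz⟩ := TmapBC_surj h3 hv.2
        have hzne : z ≠ 0 := by
          intro hC
          apply hv.1
          rw [← hmz, hC]
          exact (TmapBC_eq_zero_iff m 0).mpr rfl
        exact ⟨(m, z), Finset.mem_product.mpr ⟨Finset.mem_univ _,
          Finset.mem_erase.mpr ⟨hzne, Finset.mem_univ _⟩⟩, hmz⟩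
      · intro q hq
        rfl
    rw [hbij, ← Finset.add_sum_erase _ _ h0mem, hg0]
    push_cast
    ring
  rw [step1]
  linear_combination step3 - step2

/-! ### Statement 8 -/

/-- Fourier transform of the characteristic function of singular
binary cubic forms. -/
theorem stmt8 (p : ℕ) [Fact p.Prime] [CharP F p] (hp : p ≠ 3) (x : Fin 4 → F) :
    let Ψ : (Fin 4 → F) → ℂ := fun z => if DiscBC z = 0 then 1 else 0
    let Q : ℂ := (Fintype.card F : ℂ)
    (x = 0 → FTBC p Ψ x = 1/Q + 1/Q^2 - 1/Q^3) ∧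
    (x ≠ 0 → DiscBC x = 0 → FTBC p Ψ x = 1/Q^2 - 1/Q^3) ∧
    (DiscBC x ≠ 0 → FTBC p Ψ x = -(1/Q^3)) := by
  intro Ψ Q
  have h3 : (3:F) ≠ 0 := by
    intro h33
    have hdvd : (p : ℕ) ∣ 3 := (CharP.cast_eq_zero_iff F p 3).mp (by exact_mod_cast h33)
    exact hp ((Nat.prime_dvd_prime_iff_eq Fact.out Nat.prime_three).mp hdvd)
  have hq0 : (Fintype.card F : ℂ) ≠ 0 := Nat.cast_ne_zero.mpr Fintype.card_ne_zero
  have hft : FTBC p Ψ x = ((Fintype.card F : ℂ)^4)⁻¹ *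
      ((∑ m : Option F, if (bformBC (VoneBC m) x = 0 ∧ bformBC (VtwoBC m) x = 0)
          then ((Fintype.card F : ℂ))^2 else 0) - (Fintype.card F : ℂ)) := by
    rw [FTBC]
    congr 1
    simp only [Ψ]
    exact masterBC p h3 x
  refine ⟨?_, ?_, ?_⟩
  · rintro rfl
    have hcond : ∀ m : Option F,
        (bformBC (VoneBC m) (0 : Fin 4 → F) = 0 ∧ bformBC (VtwoBC m) (0 : Fin 4 → F) = 0) := by
      intro m
      constructor <;> simp [bformBC]
    have hsum : (∑ m : Option F, if (bformBC (VoneBC m) (0 : Fin 4 → F) = 0 ∧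
          bformBC (VtwoBC m) (0 : Fin 4 → F) = 0)
          then ((Fintype.card F : ℂ))^2 else 0) = ((Fintype.card F : ℂ) + 1) *
            ((Fintype.card F : ℂ))^2 := by
      rw [Finset.sum_congr rfl (fun m _ => if_pos (hcond m)), Finset.sum_const,
        Finset.card_univ, Fintype.card_option]
      push_cast
      ring
    rw [hft, hsum]
    show ((Fintype.card F : ℂ)^4)⁻¹ * _ = 1/Q + 1/Q^2 - 1/Q^3
    simp only [Q]
    field_simp
  · intro hx hD
    obtain ⟨m₀, hm₀⟩ := cndBC_exists h3 hD
    have hsum : (∑ m : Option F, if (bformBC (VoneBC m) x = 0 ∧ bformBC (VtwoBC m) x = 0)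
          then ((Fintype.card F : ℂ))^2 else 0) = ((Fintype.card F : ℂ))^2 := by
      rw [Finset.sum_eq_single_of_mem m₀ (Finset.mem_univ _)]
      · exact if_pos ((cnd_iff h3 x m₀).mpr hm₀)
      · intro b _ hb
        refine if_neg (fun hPb => ?_)
        exact hx (cndBC_unique h3 ((cnd_iff h3 x b).mp hPb) hm₀ hb)
    rw [hft, hsum]
    show ((Fintype.card F : ℂ)^4)⁻¹ * _ = 1/Q^2 - 1/Q^3
    simp only [Q]
    field_simp
  · intro hD
    have hsum : (∑ m : Option F, if (bformBC (VoneBC m) x = 0 ∧ bformBC (VtwoBC m) x = 0)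
          then ((Fintype.card F : ℂ))^2 else 0) = 0 := by
      refine Finset.sum_eq_zero (fun m _ => ?_)
      refine if_neg (fun hPm => ?_)
      exact hD (cndBC_disc h3 ((cnd_iff h3 x m).mp hPm))
    rw [hft, hsum]
    show ((Fintype.card F : ℂ)^4)⁻¹ * _ = -(1/Q^3)
    simp only [Q]
    field_simp
    ring

end
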